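/- Fix n ≥ 1 and X ≥ 2, and consider the family 𝔉 of weighted grid embeddings G_M of all n×n matrices M with integer entries in {0,…,X}. Suppose a labeling ℓ assigns to each G_M ∈ 𝔉 and each vertex v of G_M a finite binary string of length at most L, and there is a function f on pairs of binary strings such that f(ℓ(G_M,u), ℓ(G_M,v)) = d_{G_M}(u,v) for every G_M ∈ 𝔉 and all vertices u, v of G_M. Then 2^{2n(L+1)} ≥ (X+1)^{n²}; in particular L ≥ (n/2)·log₂(X+1) − 1. -/

import Mathlib

/-- Vertices of the grid embedding: `a j` (top terminals), `b i` (right terminals),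
`u i j` (grid intersections), `v i j` (subdivision vertex above `u i j`),
`w i j` (subdivision vertex to the right of `u i j`), `x i j` (shortcut vertices).
Indices are 1-based natural numbers; out-of-range vertices are isolated. -/
inductive GV : Type
  | a (j : ℕ)
  | b (i : ℕ)
  | u (i j : ℕ)
  | v (i j : ℕ)
  | w (i j : ℕ)
  | x (i j : ℕ)
deriving DecidableEq

/-- One-directional edge weights of the grid embedding of a boolean `R × C` matrix `M`;
`⊤` means "no edge". -/
def dirW (R C : ℕ) (M : ℕ → ℕ → Bool) : GV → GV → ℕ∞
  | GV.a j, GV.v i' j' =>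
      if i' = 1 ∧ j' = j ∧ 1 ≤ j ∧ j ≤ C then ((2 * j - 1 : ℕ) : ℕ∞) else ⊤
  | GV.v i j, GV.u i' j' =>
      if i' = i ∧ j' = j ∧ 1 ≤ i ∧ i ≤ R ∧ 1 ≤ j ∧ j ≤ C then 1 else ⊤
  | GV.u i j, GV.v i' j' =>
      if i' = i + 1 ∧ j' = j ∧ 1 ≤ i ∧ i + 1 ≤ R ∧ 1 ≤ j ∧ j ≤ C then
        ((2 * j - 1 : ℕ) : ℕ∞) else ⊤
  | GV.u i j, GV.w i' j' =>
      if i' = i ∧ j' = j ∧ 1 ≤ i ∧ i ≤ R ∧ 1 ≤ j ∧ j ≤ C then 2 else ⊤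
  | GV.w i j, GV.u i' j' =>
      if i' = i ∧ j' = j + 1 ∧ 1 ≤ i ∧ i ≤ R ∧ 1 ≤ j ∧ j + 1 ≤ C then
        ((2 * R - 2 : ℕ) : ℕ∞) else ⊤
  | GV.w i j, GV.b i' =>
      if i' = i ∧ j = C ∧ 1 ≤ i ∧ i ≤ R ∧ 1 ≤ C then ((2 * R - 2 : ℕ) : ℕ∞) else ⊤
  | GV.v i j, GV.x i' j' =>
      if i' = i ∧ j' = j ∧ M i j = true ∧ 1 ≤ i ∧ i ≤ R ∧ 1 ≤ j ∧ j ≤ C then 1 else ⊤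
  | GV.x i j, GV.w i' j' =>
      if i' = i ∧ j' = j ∧ M i j = true ∧ 1 ≤ i ∧ i ≤ R ∧ 1 ≤ j ∧ j ≤ C then 1 else ⊤
  | _, _ => ⊤

/-- Symmetrization of a one-directional weight function. -/
noncomputable def symW {V : Type} (f : V → V → ℕ∞) : V → V → ℕ∞ := fun p q => min (f p q) (f q p)

/-- Edge weights of the grid embedding of a boolean matrix `M`. -/
noncomputable def gridW (R C : ℕ) (M : ℕ → ℕ → Bool) : GV → GV → ℕ∞ := symW (dirW R C M)

/-- One-directional edge weights of the weighted grid embedding of an `R × C` matrix `M`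
with entries in `{0, …, X}`: the grid embedding of the all-ones boolean matrix with every
weight multiplied by `X²`, and the weight of each edge `(v i j, x i j)` increased by `M i j`. -/
def dirWt (R C X : ℕ) (M : ℕ → ℕ → ℕ) : GV → GV → ℕ∞ := fun p q =>
  (X : ℕ∞) ^ 2 * dirW R C (fun _ _ => true) p q +
    (match p, q with
      | GV.v i j, GV.x i' j' => if i' = i ∧ j' = j then (M i j : ℕ∞) else 0
      | _, _ => 0)

/-- Edge weights of the weighted grid embedding of `M`. -/
noncomputable def wgridW (R C X : ℕ) (M : ℕ → ℕ → ℕ) : GV → GV → ℕ∞ := symW (dirWt R C X M)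

/-- Edge weights of the mirrored grid `G'`: the (weighted, scaled by `X²`) grid embedding
with all shortcut vertices removed.  Mirroring is a weight-preserving graph isomorphism, so
the mirrored copy is represented by the same abstract graph. -/
noncomputable def mirW (R C X : ℕ) : GV → GV → ℕ∞ :=
  fun p q => (X : ℕ∞) ^ 2 * gridW R C (fun _ _ => false) p q

/-- Total weight of a walk, given as its list of visited vertices. -/
def cost {V : Type} (W : V → V → ℕ∞) : List V → ℕ∞
  | p :: q :: l => W p q + cost W (q :: l)
  | _ => 0

/-- Shortest-path distance: the least total weight of a walk from `s` to `t`
(`⊤` if there is none; walks through a non-edge have cost `⊤`). -/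
noncomputable def gdist {V : Type} (W : V → V → ℕ∞) (s t : V) : ℕ∞ :=
  sInf {c | ∃ l : List V, l.head? = some s ∧ l.getLast? = some t ∧ cost W l = c}

/-- Dual potential certifying distances from `a s` in the weighted grid. -/
def pot (n X s : ℕ) (M : ℕ → ℕ → ℕ) : GV → ℕ :=
  fun p =>
  match p with
  | GV.a j => if j < s then X^2*(2*s + 2*n*(s-j) + (2*j-1))
      else if j = s then 0
      else X^2*(2*s + 2*n*(j-s) + (2*j-1)) + M 1 s
  | GV.u i j => if j < s then X^2*(2*s + 2*n*(s-j) + 2*j*(i-1))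
      else if j = s then X^2*(2*i*s)
      else X^2*(2*i*s + 2*n*(j-(s+1)) + (2*n-1)) + M i s
  | GV.v i j => if j < s then (if i = 1 then X^2*(2*s + 2*n*(s-j))
        else X^2*(2*s + 2*n*(s-j) + 2*j*(i-2) + (2*j-1)))
      else if j = s then X^2*(2*(i-1)*s + (2*s-1))
      else X^2*(2*i*s + 2*n*(j-s)) + (if 2 ≤ i then min (M (i-1) s) (M i s) else M 1 s)
  | GV.x i j => if j < s then (if i = 1 then X^2*(2*s + 2*n*(s-(j+1)) + (2*n-1))
        else X^2*(2*s + 2*n*(s-j) + 2*j*(i-1)))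
      else if j = s then X^2*(2*i*s) + M i s
      else X^2*(2*i*s + 2*n*(j-s) + 1) + (if 2 ≤ i then min (M (i-1) s) (M i s) else M 1 s)
  | GV.w i j => if j < s then (if i = 1 then X^2*(2*s + 2*n*(s-(j+1)) + (2*n-2))
        else if i = 2 then X^2*(2*s + 2*n*(s-j) + 2*j)
        else X^2*(2*s + 2*n*(s-j) + 2*j*(i-1) + 1))
      else X^2*(2*i*s + 2*n*(j-s) + 1) + M i s
  | GV.b i => X^2*(2*i*s + 2*n*(n-s) + (2*n-1)) + M i s

section Keys
variable {Y g1 g2 w h1 h2 c : ℕ}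

lemma k00 (hg : g1 ≤ g2 + w) : Y*g1 ≤ Y*g2 + (Y*w + c) := by
  have h := Nat.mul_le_mul_left Y hg
  rw [Nat.mul_add] at h; linarith

lemma k01 (hg : g1 ≤ g2 + w) : Y*g1 ≤ (Y*g2 + h2) + (Y*w + c) := by
  have h := Nat.mul_le_mul_left Y hg
  rw [Nat.mul_add] at h; linarith

lemma k10 (hg : g1 ≤ g2 + w) (hh : h1 ≤ c) : Y*g1 + h1 ≤ Y*g2 + (Y*w + c) := by
  have h := Nat.mul_le_mul_left Y hg
  rw [Nat.mul_add] at h; linarith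

lemma k11 (hg : g1 ≤ g2 + w) (hh : h1 ≤ h2 + c) : Y*g1 + h1 ≤ (Y*g2 + h2) + (Y*w + c) := by
  have h := Nat.mul_le_mul_left Y hg
  rw [Nat.mul_add] at h; linarith

lemma s10 (hg : g1 + 1 ≤ g2 + w) (hh : h1 < Y) : Y*g1 + h1 ≤ Y*g2 + (Y*w + c) := by
  have h := Nat.mul_le_mul_left Y hg
  rw [Nat.mul_add, Nat.mul_add, Nat.mul_one] at h; linarith

lemma s11 (hg : g1 + 1 ≤ g2 + w) (hh : h1 < Y) : Y*g1 + h1 ≤ (Y*g2 + h2) + (Y*w + c) := by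
  have h := Nat.mul_le_mul_left Y hg
  rw [Nat.mul_add, Nat.mul_add, Nat.mul_one] at h; linarith

lemma kZ (hg : g1 ≤ w) : Y*g1 ≤ 0 + (Y*w + c) := by
  have h := Nat.mul_le_mul_left Y hg; linarith

end Keys

lemma mul_pred (a b : ℕ) (hb : 1 ≤ b) : a*(b-1) + a = a*b := by
  have h : (b-1)+1 = b := by omega
  calc a*(b-1) + a = a*((b-1)+1) := by ring
  _ = a*b := by rw [h]

lemma mul_pred2 (a b : ℕ) (hb : 2 ≤ b) : a*(b-2) + a = a*(b-1) := by
  have h : (b-2)+1 = b-1 := by omega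
  calc a*(b-2) + a = a*((b-2)+1) := by ring
  _ = a*(b-1) := by rw [h]

lemma mul_sub_succ (a s j : ℕ) (h : j+1 ≤ s) : a*(s-(j+1)) + a = a*(s-j) := by
  have h2 : (s-(j+1))+1 = s-j := by omega
  calc a*(s-(j+1)) + a = a*((s-(j+1))+1) := by ring
  _ = a*(s-j) := by rw [h2]

section Edges
variable {n X s : ℕ} {M : ℕ → ℕ → ℕ}

lemma edge_av (hn : 1 ≤ n) (hX : 2 ≤ X) (hs1 : 1 ≤ s) (hs2 : s ≤ n)
    (hM : ∀ i, 1 ≤ i → i ≤ n → M i s ≤ X) (j : ℕ) (hj1 : 1 ≤ j) (hj2 : j ≤ n) :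
    pot n X s M (GV.v 1 j) ≤ pot n X s M (GV.a j) + (X^2*(2*j-1) + 0) ∧
    pot n X s M (GV.a j) ≤ pot n X s M (GV.v 1 j) + (X^2*(2*j-1) + 0) := by
  rcases lt_trichotomy j s with hjs | hjs | hjs
  · simp only [pot, if_pos hjs, if_pos (rfl : (1:ℕ) = 1)]
    exact ⟨k00 (by linarith), k00 (by linarith)⟩
  · simp only [pot, hjs, lt_irrefl, if_false, if_pos (rfl : (s:ℕ) = s),
      if_pos (rfl : (1:ℕ) = 1)]
    constructor
    · exact kZ (by omega)
    · exact Nat.zero_le _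
  · have h1 : ¬ j < s := by omega
    have h2 : ¬ j = s := by omega
    simp only [pot, if_neg h1, if_neg h2, if_neg (by omega : ¬ (2:ℕ) ≤ 1)]
    have f1 : (2*j-1)+1 = 2*j := by omega
    exact ⟨k11 (by linarith) (by omega), k11 (by linarith) (by omega)⟩

lemma edge_vu (hn : 1 ≤ n) (hX : 2 ≤ X) (hs1 : 1 ≤ s) (hs2 : s ≤ n)
    (hM : ∀ i, 1 ≤ i → i ≤ n → M i s ≤ X) (i j : ℕ)
    (hi1 : 1 ≤ i) (hi2 : i ≤ n) (hj1 : 1 ≤ j) (hj2 : j ≤ n) :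
    pot n X s M (GV.u i j) ≤ pot n X s M (GV.v i j) + (X^2*1 + 0) ∧
    pot n X s M (GV.v i j) ≤ pot n X s M (GV.u i j) + (X^2*1 + 0) := by
  have hXY : X < X^2 := by nlinarith
  rcases lt_trichotomy j s with hjs | hjs | hjs
  · rcases Nat.lt_or_ge i 2 with hi | hi
    · have hi1' : i = 1 := by omega
      subst hi1'
      simp only [pot, if_pos hjs, if_pos (rfl : (1:ℕ) = 1)]
      have f1 : 2*j*(1-1) = 0 := by simp
      exact ⟨k00 (by linarith), k00 (by linarith)⟩
    · simp only [pot, if_pos hjs, if_neg (by omega : ¬ i = 1)]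
      have f1 := mul_pred2 (2*j) i hi
      have f2 := mul_pred (2*j) i hi1
      have f3 : (2*j-1)+1 = 2*j := by omega
      exact ⟨k00 (by linarith), k00 (by linarith)⟩
  · have h1 : ¬ j < s := by omega
    simp only [pot, if_neg h1, if_pos hjs]
    have f1 : 2*(i-1)*s + 2*s = 2*i*s := by
      have h : (i-1)+1 = i := by omega
      calc 2*(i-1)*s + 2*s = 2*((i-1)+1)*s := by ring
      _ = 2*i*s := by rw [h]
    have f2 : (2*s-1)+1 = 2*s := by omega
    exact ⟨k00 (by linarith), k00 (by linarith)⟩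
  · have h1 : ¬ j < s := by omega
    have h2 : ¬ j = s := by omega
    simp only [pot, if_neg h1, if_neg h2]
    have f1 := mul_sub_succ (2*n) j s (by omega)
    have f2 : (2*n-1)+1 = 2*n := by omega
    rcases Nat.lt_or_ge i 2 with hi | hi
    · have hi1' : i = 1 := by omega
      subst hi1'
      simp only [if_neg (by omega : ¬ (2:ℕ) ≤ 1)]
      exact ⟨k11 (by linarith) (by omega), k11 (by linarith) (by omega)⟩
    · simp only [if_pos hi]
      constructor
      · exact s11 (by linarith) (lt_of_le_of_lt (hM i hi1 hi2) hXY)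
      · exact k11 (by linarith) (by omega)

lemma edge_uv (hn : 1 ≤ n) (hX : 2 ≤ X) (hs1 : 1 ≤ s) (hs2 : s ≤ n)
    (hM : ∀ i, 1 ≤ i → i ≤ n → M i s ≤ X) (i j : ℕ)
    (hi1 : 1 ≤ i) (hi2 : i + 1 ≤ n) (hj1 : 1 ≤ j) (hj2 : j ≤ n) :
    pot n X s M (GV.v (i+1) j) ≤ pot n X s M (GV.u i j) + (X^2*(2*j-1) + 0) ∧
    pot n X s M (GV.u i j) ≤ pot n X s M (GV.v (i+1) j) + (X^2*(2*j-1) + 0) := by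
  have hXY : X < X^2 := by nlinarith
  rcases lt_trichotomy j s with hjs | hjs | hjs
  · simp only [pot, if_pos hjs, if_neg (by omega : ¬ i + 1 = 1)]
    have f1 : 2*j*(i+1-2) = 2*j*(i-1) := by rw [show i+1-2 = i-1 by omega]
    have f2 := mul_pred (2*j) i hi1
    have f3 : (2*j-1)+1 = 2*j := by omega
    exact ⟨k00 (by linarith), k00 (by linarith)⟩
  · have h1 : ¬ j < s := by omega
    simp only [pot, if_neg h1, if_pos hjs]
    have f1 : 2*(i+1-1)*s = 2*i*s := by rw [show i+1-1 = i by omega]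
    have f2 : 2*(i+1)*s = 2*i*s + 2*s := by ring
    have f3 : (2*s-1)+1 = 2*s := by omega
    have f4 : s = j := hjs.symm
    have f5 : 2*j-1 = 2*s-1 := by omega
    exact ⟨k00 (by linarith), k00 (by linarith)⟩
  · have h1 : ¬ j < s := by omega
    have h2 : ¬ j = s := by omega
    simp only [pot, if_neg h1, if_neg h2, if_pos (by omega : 2 ≤ i + 1),
      Nat.add_sub_cancel]
    have f1 := mul_sub_succ (2*n) j s (by omega)
    have f2 : (2*n-1)+1 = 2*n := by omega
    have f3 : 2*(i+1)*s = 2*i*s + 2*s := by ring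
    have f4 : (2*j-1)+1 = 2*j := by omega
    have f5 : 2*s + 2 ≤ 2*j := by omega
    constructor
    · exact k11 (by linarith) (by omega)
    · exact s11 (by linarith) (lt_of_le_of_lt (hM i hi1 (by omega)) hXY)

lemma edge_uw (hn : 1 ≤ n) (hX : 2 ≤ X) (hs1 : 1 ≤ s) (hs2 : s ≤ n)
    (hM : ∀ i, 1 ≤ i → i ≤ n → M i s ≤ X) (i j : ℕ)
    (hi1 : 1 ≤ i) (hi2 : i ≤ n) (hj1 : 1 ≤ j) (hj2 : j ≤ n) :
    pot n X s M (GV.w i j) ≤ pot n X s M (GV.u i j) + (X^2*2 + 0) ∧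
    pot n X s M (GV.u i j) ≤ pot n X s M (GV.w i j) + (X^2*2 + 0) := by
  have hXY : X < X^2 := by nlinarith
  rcases lt_trichotomy j s with hjs | hjs | hjs
  · rcases Nat.lt_or_ge i 2 with hi | hi
    · have hi1' : i = 1 := by omega
      subst hi1'
      simp only [pot, if_pos hjs, if_pos (rfl : (1:ℕ) = 1)]
      have f1 : 2*j*(1-1) = 0 := by simp
      have f2 := mul_sub_succ (2*n) s j (by omega)
      have f3 : (2*n-2)+2 = 2*n := by omega
      exact ⟨k00 (by linarith), k00 (by linarith)⟩
    · rcases Nat.lt_or_ge i 3 with hi3 | hi3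
      · have hi2' : i = 2 := by omega
        subst hi2'
        simp only [pot, if_pos hjs, if_neg (by omega : ¬ (2:ℕ) = 1),
          if_pos (rfl : (2:ℕ) = 2)]
        have f1 : 2*j*(2-1) = 2*j := by norm_num
        exact ⟨k00 (by linarith), k00 (by linarith)⟩
      · simp only [pot, if_pos hjs, if_neg (by omega : ¬ i = 1),
          if_neg (by omega : ¬ i = 2)]
        exact ⟨k00 (by linarith), k00 (by linarith)⟩
  · have h1 : ¬ j < s := by omega
    simp only [pot, if_neg h1, if_pos hjs]
    have f1 : 2*n*(j-s) = 0 := by rw [show j - s = 0 by omega, Nat.mul_zero]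
    exact ⟨s10 (by linarith) (lt_of_le_of_lt (hM i hi1 hi2) hXY), k01 (by linarith)⟩
  · have h1 : ¬ j < s := by omega
    have h2 : ¬ j = s := by omega
    simp only [pot, if_neg h1, if_neg h2]
    have f1 := mul_sub_succ (2*n) j s (by omega)
    have f2 : (2*n-1)+1 = 2*n := by omega
    exact ⟨k11 (by linarith) (by omega), k11 (by linarith) (by omega)⟩

lemma edge_wu (hn : 1 ≤ n) (hX : 2 ≤ X) (hs1 : 1 ≤ s) (hs2 : s ≤ n)
    (hM : ∀ i, 1 ≤ i → i ≤ n → M i s ≤ X) (i j : ℕ)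
    (hi1 : 1 ≤ i) (hi2 : i ≤ n) (hj1 : 1 ≤ j) (hj2 : j + 1 ≤ n) :
    pot n X s M (GV.u i (j+1)) ≤ pot n X s M (GV.w i j) + (X^2*(2*n-2) + 0) ∧
    pot n X s M (GV.w i j) ≤ pot n X s M (GV.u i (j+1)) + (X^2*(2*n-2) + 0) := by
  have hXY : X < X^2 := by nlinarith
  rcases lt_trichotomy (j+1) s with hjs | hjs | hjs
  · have hj : j < s := by omega
    have f0 := mul_sub_succ (2*n) s j (by omega)
    have fn : (2*n-2)+2 = 2*n := by omega
    rcases Nat.lt_or_ge i 2 with hi | hi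
    · have hi1' : i = 1 := by omega
      subst hi1'
      simp only [pot, if_pos hj, if_pos hjs, if_pos (rfl : (1:ℕ) = 1)]
      have f1 : 2*(j+1)*(1-1) = 0 := by simp
      exact ⟨k00 (by linarith), k00 (by linarith)⟩
    · rcases Nat.lt_or_ge i 3 with hi3 | hi3
      · have hi2' : i = 2 := by omega
        subst hi2'
        simp only [pot, if_pos hj, if_pos hjs, if_neg (by omega : ¬ (2:ℕ) = 1),
          if_pos (rfl : (2:ℕ) = 2)]
        have f1 : 2*(j+1)*(2-1) = 2*j + 2 := by norm_num; ring
        have f2 : 2*j*(2-1) = 2*j := by norm_num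
        exact ⟨k00 (by linarith), k00 (by linarith)⟩
      · simp only [pot, if_pos hj, if_pos hjs, if_neg (by omega : ¬ i = 1),
          if_neg (by omega : ¬ i = 2)]
        have f1 : 2*(j+1)*(i-1) = 2*j*(i-1) + 2*(i-1) := by ring
        have f2 : 4 ≤ 2*(i-1) := by omega
        have f3 : 2*(i-1) ≤ 2*n-2 := by omega
        exact ⟨k00 (by linarith), k00 (by linarith)⟩
  · have hj : j < s := by omega
    have fn : (2*n-2)+2 = 2*n := by omega
    have h1 : ¬ j + 1 < s := by omega
    rcases Nat.lt_or_ge i 2 with hi | hi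
    · have hi1' : i = 1 := by omega
      subst hi1'
      simp only [pot, if_pos hj, if_neg h1, if_pos hjs, if_pos (rfl : (1:ℕ) = 1)]
      have f1 : 2*n*(s-(j+1)) = 0 := by rw [show s-(j+1) = 0 by omega, Nat.mul_zero]
      have f2 : 2*1*s = 2*s := by ring
      exact ⟨k00 (by linarith), k00 (by linarith)⟩
    · rcases Nat.lt_or_ge i 3 with hi3 | hi3
      · have hi2' : i = 2 := by omega
        subst hi2'
        simp only [pot, if_pos hj, if_neg h1, if_pos hjs,
          if_neg (by omega : ¬ (2:ℕ) = 1), if_pos (rfl : (2:ℕ) = 2)]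
        have f1 : 2*n*(s-j) = 2*n := by rw [show s-j = 1 by omega, Nat.mul_one]
        have f2 : 2*2*s = 2*j + 2*s + 2 := by rw [show s = j+1 by omega]; ring
        exact ⟨k00 (by linarith), k00 (by linarith)⟩
      · simp only [pot, if_pos hj, if_neg h1, if_pos hjs,
          if_neg (by omega : ¬ i = 1), if_neg (by omega : ¬ i = 2)]
        have f1 : 2*n*(s-j) = 2*n := by rw [show s-j = 1 by omega, Nat.mul_one]
        have f2 : 2*i*s = 2*j*(i-1) + 2*j + 2*i := by
          have h : (i-1)+1 = i := by omega
          calc 2*i*s = 2*i*(j+1) := by rw [show s = j+1 by omega]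
          _ = 2*((i-1)+1)*(j+1) := by rw [h]
          _ = 2*j*(i-1) + 2*j + 2*((i-1)+1) := by ring
          _ = 2*j*(i-1) + 2*j + 2*i := by rw [h]
        have f3 : 4 ≤ 2*(i-1) := by omega
        have f4 : 2*i ≤ 2*n := by omega
        have f5 : (2*n-2)+2 = 2*n := by omega
        have f6 : 2*i = 2*(i-1) + 2 := by omega
        exact ⟨k00 (by linarith), k00 (by linarith)⟩
  · have h1 : ¬ j < s := by omega
    have h2 : ¬ j + 1 < s := by omega
    have h3 : ¬ j + 1 = s := by omega
    rcases eq_or_lt_of_le (by omega : s ≤ j) with hjs' | hjs'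
    · -- j = s
      simp only [pot, if_neg h1, if_neg h2, if_neg h3]
      have f1 : 2*n*(j-s) = 0 := by rw [show j - s = 0 by omega, Nat.mul_zero]
      have f2 : 2*n*(j+1-(s+1)) = 0 := by rw [show j+1-(s+1) = 0 by omega, Nat.mul_zero]
      have f3 : (2*n-1) = (2*n-2)+1 := by omega
      exact ⟨k11 (by linarith) (by omega), k11 (by linarith) (by omega)⟩
    · -- j > s
      simp only [pot, if_neg h1, if_neg h2, if_neg h3]
      have f1 : 2*n*(j+1-(s+1)) = 2*n*(j-s) := by rw [show j+1-(s+1) = j-s by omega]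
      have f3 : (2*n-1) = (2*n-2)+1 := by omega
      exact ⟨k11 (by linarith) (by omega), k11 (by linarith) (by omega)⟩

lemma edge_wb (hn : 1 ≤ n) (hX : 2 ≤ X) (hs1 : 1 ≤ s) (hs2 : s ≤ n)
    (hM : ∀ i, 1 ≤ i → i ≤ n → M i s ≤ X) (i : ℕ)
    (hi1 : 1 ≤ i) (hi2 : i ≤ n) :
    pot n X s M (GV.b i) ≤ pot n X s M (GV.w i n) + (X^2*(2*n-2) + 0) ∧
    pot n X s M (GV.w i n) ≤ pot n X s M (GV.b i) + (X^2*(2*n-2) + 0) := by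
  have h1 : ¬ n < s := by omega
  simp only [pot, if_neg h1]
  have f3 : (2*n-1) = (2*n-2)+1 := by omega
  exact ⟨k11 (by linarith) (by omega), k11 (by linarith) (by omega)⟩

lemma edge_vx (hn : 1 ≤ n) (hX : 2 ≤ X) (hs1 : 1 ≤ s) (hs2 : s ≤ n)
    (hM : ∀ i, 1 ≤ i → i ≤ n → M i s ≤ X) (i j : ℕ)
    (hi1 : 1 ≤ i) (hi2 : i ≤ n) (hj1 : 1 ≤ j) (hj2 : j ≤ n) :
    pot n X s M (GV.x i j) ≤ pot n X s M (GV.v i j) + (X^2*1 + M i j) ∧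
    pot n X s M (GV.v i j) ≤ pot n X s M (GV.x i j) + (X^2*1 + M i j) := by
  have hXY : X < X^2 := by nlinarith
  rcases lt_trichotomy j s with hjs | hjs | hjs
  · rcases Nat.lt_or_ge i 2 with hi | hi
    · have hi1' : i = 1 := by omega
      subst hi1'
      simp only [pot, if_pos hjs, if_pos (rfl : (1:ℕ) = 1)]
      have f1 := mul_sub_succ (2*n) s j (by omega)
      have f2 : (2*n-1)+1 = 2*n := by omega
      exact ⟨k00 (by linarith), k00 (by linarith)⟩
    · simp only [pot, if_pos hjs, if_neg (by omega : ¬ i = 1)]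
      have f1 := mul_pred2 (2*j) i hi
      have f2 : (2*j-1)+1 = 2*j := by omega
      exact ⟨k00 (by linarith), k00 (by linarith)⟩
  · have h1 : ¬ j < s := by omega
    simp only [pot, if_neg h1, if_pos hjs]
    have f1 : 2*(i-1)*s + 2*s = 2*i*s := by
      have h : (i-1)+1 = i := by omega
      calc 2*(i-1)*s + 2*s = 2*((i-1)+1)*s := by ring
      _ = 2*i*s := by rw [h]
    have f2 : (2*s-1)+1 = 2*s := by omega
    constructor
    · exact k10 (by linarith) (by rw [hjs])
    · exact k01 (by linarith)
  · have h1 : ¬ j < s := by omega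
    have h2 : ¬ j = s := by omega
    simp only [pot, if_neg h1, if_neg h2]
    exact ⟨k11 (by linarith) (Nat.le_add_right _ _),
      k11 (by linarith) (Nat.le_add_right _ _)⟩

lemma edge_xw (hn : 1 ≤ n) (hX : 2 ≤ X) (hs1 : 1 ≤ s) (hs2 : s ≤ n)
    (hM : ∀ i, 1 ≤ i → i ≤ n → M i s ≤ X) (i j : ℕ)
    (hi1 : 1 ≤ i) (hi2 : i ≤ n) (hj1 : 1 ≤ j) (hj2 : j ≤ n) :
    pot n X s M (GV.w i j) ≤ pot n X s M (GV.x i j) + (X^2*1 + 0) ∧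
    pot n X s M (GV.x i j) ≤ pot n X s M (GV.w i j) + (X^2*1 + 0) := by
  have hXY : X < X^2 := by nlinarith
  rcases lt_trichotomy j s with hjs | hjs | hjs
  · rcases Nat.lt_or_ge i 2 with hi | hi
    · have hi1' : i = 1 := by omega
      subst hi1'
      simp only [pot, if_pos hjs, if_pos (rfl : (1:ℕ) = 1)]
      have f1 : (2*n-1) = (2*n-2)+1 := by omega
      exact ⟨k00 (by linarith), k00 (by linarith)⟩
    · rcases Nat.lt_or_ge i 3 with hi3 | hi3
      · have hi2' : i = 2 := by omega
        subst hi2'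
        simp only [pot, if_pos hjs, if_neg (by omega : ¬ (2:ℕ) = 1),
          if_pos (rfl : (2:ℕ) = 2)]
        have f1 : 2*j*(2-1) = 2*j := by norm_num
        exact ⟨k00 (by linarith), k00 (by linarith)⟩
      · simp only [pot, if_pos hjs, if_neg (by omega : ¬ i = 1),
          if_neg (by omega : ¬ i = 2)]
        exact ⟨k00 (by linarith), k00 (by linarith)⟩
  · have h1 : ¬ j < s := by omega
    simp only [pot, if_neg h1, if_pos hjs]
    have f1 : 2*n*(j-s) = 0 := by rw [show j - s = 0 by omega, Nat.mul_zero]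
    exact ⟨k11 (by linarith) (by omega), k11 (by linarith) (by omega)⟩
  · have h1 : ¬ j < s := by omega
    have h2 : ¬ j = s := by omega
    simp only [pot, if_neg h1, if_neg h2]
    constructor
    · exact s11 (by linarith) (lt_of_le_of_lt (hM i hi1 hi2) hXY)
    · refine k11 (by linarith) ?_
      split_ifs with h
      · omega
      · have : i = 1 := by omega
        subst this; omega

end Edges

section Assemble
variable {n X s : ℕ} {M : ℕ → ℕ → ℕ}

lemma pot_feas_dir (hn : 1 ≤ n) (hX : 2 ≤ X) (hs1 : 1 ≤ s) (hs2 : s ≤ n)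
    (hM : ∀ i, 1 ≤ i → i ≤ n → M i s ≤ X) (p q : GV) :
    (pot n X s M q : ℕ∞) ≤ (pot n X s M p : ℕ∞) + dirWt n n X M p q ∧
    (pot n X s M p : ℕ∞) ≤ (pot n X s M q : ℕ∞) + dirWt n n X M p q := by
  have hXne : (X:ℕ∞) ≠ 0 := Nat.cast_ne_zero.mpr (by omega)
  have htop : (X:ℕ∞)^2 * ⊤ = ⊤ := WithTop.mul_top (pow_ne_zero 2 hXne)
  cases p <;> cases q <;> simp only [dirWt, dirW] <;>
    try (constructor <;> simp [htop] <;> done)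
  case a.v j i' j' =>
    by_cases h : i' = 1 ∧ j' = j ∧ 1 ≤ j ∧ j ≤ n
    swap
    · simp only [if_neg h]; constructor <;> simp [htop] <;> done
    simp only [if_pos h]
    obtain ⟨rfl, rfl, hj1, hj2⟩ := h
    exact_mod_cast edge_av hn hX hs1 hs2 hM _ hj1 hj2
  case v.u i j i' j' =>
    by_cases h : i' = i ∧ j' = j ∧ 1 ≤ i ∧ i ≤ n ∧ 1 ≤ j ∧ j ≤ n
    swap
    · simp only [if_neg h]; constructor <;> simp [htop] <;> done
    simp only [if_pos h]
    obtain ⟨rfl, rfl, hi1, hi2, hj1, hj2⟩ := h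
    exact_mod_cast edge_vu hn hX hs1 hs2 hM _ _ hi1 hi2 hj1 hj2
  case u.v i j i' j' =>
    by_cases h : i' = i + 1 ∧ j' = j ∧ 1 ≤ i ∧ i + 1 ≤ n ∧ 1 ≤ j ∧ j ≤ n
    swap
    · simp only [if_neg h]; constructor <;> simp [htop] <;> done
    simp only [if_pos h]
    obtain ⟨rfl, rfl, hi1, hi2, hj1, hj2⟩ := h
    exact_mod_cast edge_uv hn hX hs1 hs2 hM _ _ hi1 hi2 hj1 hj2
  case u.w i j i' j' =>
    by_cases h : i' = i ∧ j' = j ∧ 1 ≤ i ∧ i ≤ n ∧ 1 ≤ j ∧ j ≤ n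
    swap
    · simp only [if_neg h]; constructor <;> simp [htop] <;> done
    simp only [if_pos h]
    obtain ⟨rfl, rfl, hi1, hi2, hj1, hj2⟩ := h
    exact_mod_cast edge_uw hn hX hs1 hs2 hM _ _ hi1 hi2 hj1 hj2
  case w.u i j i' j' =>
    by_cases h : i' = i ∧ j' = j + 1 ∧ 1 ≤ i ∧ i ≤ n ∧ 1 ≤ j ∧ j + 1 ≤ n
    swap
    · simp only [if_neg h]; constructor <;> simp [htop] <;> done
    simp only [if_pos h]
    obtain ⟨rfl, rfl, hi1, hi2, hj1, hj2⟩ := h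
    exact_mod_cast edge_wu hn hX hs1 hs2 hM _ _ hi1 hi2 hj1 hj2
  case w.b i j i' =>
    by_cases h : i' = i ∧ j = n ∧ 1 ≤ i ∧ i ≤ n ∧ 1 ≤ n
    swap
    · simp only [if_neg h]; constructor <;> simp [htop] <;> done
    simp only [if_pos h]
    obtain ⟨rfl, rfl, hi1, hi2, -⟩ := h
    exact_mod_cast edge_wb hn hX hs1 hs2 hM _ hi1 hi2
  case v.x i j i' j' =>
    by_cases h : i' = i ∧ j' = j ∧ True ∧ 1 ≤ i ∧ i ≤ n ∧ 1 ≤ j ∧ j ≤ n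
    swap
    · simp only [if_neg h]; constructor <;> simp [htop] <;> done
    simp only [if_pos h, if_pos (⟨h.1, h.2.1⟩ : i' = i ∧ j' = j)]
    obtain ⟨rfl, rfl, -, hi1, hi2, hj1, hj2⟩ := h
    exact_mod_cast edge_vx hn hX hs1 hs2 hM _ _ hi1 hi2 hj1 hj2
  case x.w i j i' j' =>
    by_cases h : i' = i ∧ j' = j ∧ True ∧ 1 ≤ i ∧ i ≤ n ∧ 1 ≤ j ∧ j ≤ n
    swap
    · simp only [if_neg h]; constructor <;> simp [htop] <;> done
    simp only [if_pos h]
    obtain ⟨rfl, rfl, -, hi1, hi2, hj1, hj2⟩ := h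
    exact_mod_cast edge_xw hn hX hs1 hs2 hM _ _ hi1 hi2 hj1 hj2

lemma pot_feas (hn : 1 ≤ n) (hX : 2 ≤ X) (hs1 : 1 ≤ s) (hs2 : s ≤ n)
    (hM : ∀ i, 1 ≤ i → i ≤ n → M i s ≤ X) (p q : GV) :
    (pot n X s M q : ℕ∞) ≤ (pot n X s M p : ℕ∞) + wgridW n n X M p q := by
  have h1 := (pot_feas_dir hn hX hs1 hs2 hM p q).1
  have h2 := (pot_feas_dir hn hX hs1 hs2 hM q p).2
  unfold wgridW symW
  rcases min_cases (dirWt n n X M p q) (dirWt n n X M q p) with ⟨he, -⟩ | ⟨he, -⟩ <;>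
    rw [he]
  · exact h1
  · exact h2

lemma cost_ge {V : Type} (W : V → V → ℕ∞) (φ : V → ℕ)
    (hfeas : ∀ p q, (φ q : ℕ∞) ≤ φ p + W p q) :
    ∀ (l : List V) (p q : V), l.head? = some p → l.getLast? = some q →
      (φ q : ℕ∞) ≤ φ p + cost W l := by
  intro l
  induction l with
  | nil => intro p q hp; simp at hp
  | cons r t ih =>
    intro p q hp hq
    have hrp : r = p := by simpa using hp
    subst hrp
    cases t with
    | nil =>
      have : r = q := by simpa using hq
      subst this
      simp [cost]
    | cons r' t' =>
      have hq' : (r' :: t').getLast? = some q := by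
        rwa [List.getLast?_cons_cons] at hq
      have h1 := ih r' q rfl hq'
      have h2 := hfeas r r'
      calc (φ q : ℕ∞) ≤ φ r' + cost W (r' :: t') := h1
      _ ≤ (φ r + W r r') + cost W (r' :: t') := add_le_add_left h2 _
      _ = φ r + cost W (r :: r' :: t') := by rw [cost, add_assoc]

lemma gdist_ge (hn : 1 ≤ n) (hX : 2 ≤ X) (hs1 : 1 ≤ s) (hs2 : s ≤ n)
    (hM : ∀ i, 1 ≤ i → i ≤ n → M i s ≤ X) (t : GV) :
    (pot n X s M t : ℕ∞) ≤ gdist (wgridW n n X M) (GV.a s) t := by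
  refine le_sInf ?_
  rintro c ⟨l, hh, ht, rfl⟩
  have := cost_ge (wgridW n n X M) (pot n X s M)
    (pot_feas hn hX hs1 hs2 hM) l _ _ hh ht
  have hz : pot n X s M (GV.a s) = 0 := by
    simp [pot]
  rw [hz] at this
  simpa using this

end Assemble

section Path
variable {n X s : ℕ} {M : ℕ → ℕ → ℕ}

lemma Wav (hX : 2 ≤ X) (hs1 : 1 ≤ s) (hs2 : s ≤ n) :
    wgridW n n X M (GV.a s) (GV.v 1 s) = ((X^2*(2*s-1) : ℕ) : ℕ∞) := by
  have hXne : (X:ℕ∞) ≠ 0 := Nat.cast_ne_zero.mpr (by omega)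
  have htop : (X:ℕ∞)^2 * ⊤ = ⊤ := WithTop.mul_top (pow_ne_zero 2 hXne)
  unfold wgridW symW dirWt
  simp only [dirW]
  simp [hs1, hs2, htop]
  try push_cast
  try ring
lemma Wvu (hX : 2 ≤ X) (r : ℕ) (hr1 : 1 ≤ r) (hr2 : r ≤ n) (hs1 : 1 ≤ s) (hs2 : s ≤ n) :
    wgridW n n X M (GV.v r s) (GV.u r s) = ((X^2 : ℕ) : ℕ∞) := by
  have hXne : (X:ℕ∞) ≠ 0 := Nat.cast_ne_zero.mpr (by omega)
  have htop : (X:ℕ∞)^2 * ⊤ = ⊤ := WithTop.mul_top (pow_ne_zero 2 hXne)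
  unfold wgridW symW dirWt
  simp only [dirW]
  simp [hr1, hr2, hs1, hs2, htop]
  try push_cast
  try ring
lemma Wuv (hX : 2 ≤ X) (r : ℕ) (hr1 : 1 ≤ r) (hr2 : r + 1 ≤ n) (hs1 : 1 ≤ s) (hs2 : s ≤ n) :
    wgridW n n X M (GV.u r s) (GV.v (r+1) s) = ((X^2*(2*s-1) : ℕ) : ℕ∞) := by
  have hXne : (X:ℕ∞) ≠ 0 := Nat.cast_ne_zero.mpr (by omega)
  have htop : (X:ℕ∞)^2 * ⊤ = ⊤ := WithTop.mul_top (pow_ne_zero 2 hXne)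
  unfold wgridW symW dirWt
  simp only [dirW]
  simp [hr1, hr2, hs1, hs2, htop]
  try push_cast
  try ring
lemma Wvx (hX : 2 ≤ X) (i : ℕ) (hi1 : 1 ≤ i) (hi2 : i ≤ n) (hs1 : 1 ≤ s) (hs2 : s ≤ n) :
    wgridW n n X M (GV.v i s) (GV.x i s) = ((X^2 + M i s : ℕ) : ℕ∞) := by
  have hXne : (X:ℕ∞) ≠ 0 := Nat.cast_ne_zero.mpr (by omega)
  have htop : (X:ℕ∞)^2 * ⊤ = ⊤ := WithTop.mul_top (pow_ne_zero 2 hXne)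
  unfold wgridW symW dirWt
  simp only [dirW]
  simp [hi1, hi2, hs1, hs2, htop]
  try push_cast
  try ring
lemma Wxw (hX : 2 ≤ X) (i : ℕ) (hi1 : 1 ≤ i) (hi2 : i ≤ n) (hs1 : 1 ≤ s) (hs2 : s ≤ n) :
    wgridW n n X M (GV.x i s) (GV.w i s) = ((X^2 : ℕ) : ℕ∞) := by
  have hXne : (X:ℕ∞) ≠ 0 := Nat.cast_ne_zero.mpr (by omega)
  have htop : (X:ℕ∞)^2 * ⊤ = ⊤ := WithTop.mul_top (pow_ne_zero 2 hXne)
  unfold wgridW symW dirWt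
  simp only [dirW]
  simp [hi1, hi2, hs1, hs2, htop]
  try push_cast
  try ring
lemma Wwu (hX : 2 ≤ X) (i c : ℕ) (hi1 : 1 ≤ i) (hi2 : i ≤ n) (hc1 : 1 ≤ c) (hc2 : c + 1 ≤ n) :
    wgridW n n X M (GV.w i c) (GV.u i (c+1)) = ((X^2*(2*n-2) : ℕ) : ℕ∞) := by
  have hXne : (X:ℕ∞) ≠ 0 := Nat.cast_ne_zero.mpr (by omega)
  have htop : (X:ℕ∞)^2 * ⊤ = ⊤ := WithTop.mul_top (pow_ne_zero 2 hXne)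
  unfold wgridW symW dirWt
  simp only [dirW]
  simp [hi1, hi2, hc1, hc2, htop]
  try push_cast
  try ring
lemma Wuw (hX : 2 ≤ X) (i c : ℕ) (hi1 : 1 ≤ i) (hi2 : i ≤ n) (hc1 : 1 ≤ c) (hc2 : c ≤ n) :
    wgridW n n X M (GV.u i c) (GV.w i c) = ((X^2*2 : ℕ) : ℕ∞) := by
  have hXne : (X:ℕ∞) ≠ 0 := Nat.cast_ne_zero.mpr (by omega)
  have htop : (X:ℕ∞)^2 * ⊤ = ⊤ := WithTop.mul_top (pow_ne_zero 2 hXne)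
  unfold wgridW symW dirWt
  simp only [dirW]
  simp [hi1, hi2, hc1, hc2, htop]
  try push_cast
  try ring
lemma Wwb (hX : 2 ≤ X) (i : ℕ) (hi1 : 1 ≤ i) (hi2 : i ≤ n) (hn : 1 ≤ n) :
    wgridW n n X M (GV.w i n) (GV.b i) = ((X^2*(2*n-2) : ℕ) : ℕ∞) := by
  have hXne : (X:ℕ∞) ≠ 0 := Nat.cast_ne_zero.mpr (by omega)
  have htop : (X:ℕ∞)^2 * ⊤ = ⊤ := WithTop.mul_top (pow_ne_zero 2 hXne)
  unfold wgridW symW dirWt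
  simp only [dirW]
  simp [hi1, hi2, hn, htop]
  try push_cast
  try ring
end Path

/-- Vertical segment of the canonical path: `v r s, u r s, v (r+1) s, …, v (r+k) s`. -/
def vseg (s : ℕ) : ℕ → ℕ → List GV
  | 0, r => [GV.v r s]
  | k+1, r => GV.v r s :: GV.u r s :: vseg s k (r+1)

/-- Horizontal segment: `w i c, u i (c+1), w i (c+1), …, w i (c+k)`. -/
def hseg (i : ℕ) : ℕ → ℕ → List GV
  | 0, c => [GV.w i c]
  | k+1, c => GV.w i c :: GV.u i (c+1) :: hseg i k (c+1)

lemma vseg_cons (s k r : ℕ) : ∃ t, vseg s k r = GV.v r s :: t := by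
  cases k <;> exact ⟨_, rfl⟩

lemma hseg_cons (i k c : ℕ) : ∃ t, hseg i k c = GV.w i c :: t := by
  cases k <;> exact ⟨_, rfl⟩

section PathCost
variable {n X s : ℕ} {M : ℕ → ℕ → ℕ}

lemma cost_vseg (hX : 2 ≤ X) (hs1 : 1 ≤ s) (hs2 : s ≤ n) :
    ∀ (k r : ℕ), 1 ≤ r → r + k ≤ n → ∀ tail : List GV,
    cost (wgridW n n X M) (vseg s k r ++ tail) =
      ((k*(2*s*X^2) : ℕ) : ℕ∞) + cost (wgridW n n X M) (GV.v (r+k) s :: tail) := by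
  intro k
  induction k with
  | zero => intro r hr1 hr2 tail; simp [vseg]
  | succ k ih =>
    intro r hr1 hr2 tail
    obtain ⟨t, ht⟩ := vseg_cons s k (r+1)
    have hL : vseg s (k+1) r ++ tail =
        GV.v r s :: GV.u r s :: GV.v (r+1) s :: (t ++ tail) := by
      simp [vseg, ht]
    rw [hL, cost, cost]
    have hback : GV.v (r+1) s :: (t ++ tail) = vseg s k (r+1) ++ tail := by
      simp [ht]
    rw [hback, ih (r+1) (by omega) (by omega) tail]
    rw [Wvu hX r hr1 (by omega) hs1 hs2, Wuv hX r hr1 (by omega) hs1 hs2]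
    have harith : X^2 + (X^2*(2*s-1) + (k*(2*s*X^2))) = (k+1)*(2*s*X^2) := by
      have h1 := mul_pred (X^2) (2*s) (by omega)
      have h2 : (k+1)*(2*s*X^2) = k*(2*s*X^2) + 2*s*X^2 := by ring
      have h3 : X^2*(2*s) = 2*s*X^2 := by ring
      linarith
    calc ((X^2 : ℕ) : ℕ∞) + (((X^2*(2*s-1) : ℕ) : ℕ∞) +
          (((k*(2*s*X^2) : ℕ) : ℕ∞) + cost (wgridW n n X M) (GV.v (r+1+k) s :: tail)))
        = ((X^2 + (X^2*(2*s-1) + (k*(2*s*X^2))) : ℕ) : ℕ∞) +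
          cost (wgridW n n X M) (GV.v (r+1+k) s :: tail) := by
          push_cast; ring
      _ = (((k+1)*(2*s*X^2) : ℕ) : ℕ∞) +
          cost (wgridW n n X M) (GV.v (r+(k+1)) s :: tail) := by
          rw [harith, show r+1+k = r+(k+1) by omega]

lemma cost_hseg (hX : 2 ≤ X) (i : ℕ) (hi1 : 1 ≤ i) (hi2 : i ≤ n) :
    ∀ (k c : ℕ), 1 ≤ c → c + k ≤ n → ∀ tail : List GV,
    cost (wgridW n n X M) (hseg i k c ++ tail) =
      ((k*(2*n*X^2) : ℕ) : ℕ∞) + cost (wgridW n n X M) (GV.w i (c+k) :: tail) := by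
  intro k
  induction k with
  | zero => intro c hc1 hc2 tail; simp [hseg]
  | succ k ih =>
    intro c hc1 hc2 tail
    obtain ⟨t, ht⟩ := hseg_cons i k (c+1)
    have hL : hseg i (k+1) c ++ tail =
        GV.w i c :: GV.u i (c+1) :: GV.w i (c+1) :: (t ++ tail) := by
      simp [hseg, ht]
    rw [hL, cost, cost]
    have hback : GV.w i (c+1) :: (t ++ tail) = hseg i k (c+1) ++ tail := by
      simp [ht]
    rw [hback, ih (c+1) (by omega) (by omega) tail]
    rw [Wwu hX i c hi1 hi2 hc1 (by omega), Wuw hX i (c+1) hi1 hi2 (by omega) (by omega)]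
    have harith : X^2*(2*n-2) + (X^2*2 + (k*(2*n*X^2))) = (k+1)*(2*n*X^2) := by
      have h1 : X^2*(2*n-2) + X^2*2 = X^2*(2*n) := by
        have : (2*n-2) + 2 = 2*n := by omega
        calc X^2*(2*n-2) + X^2*2 = X^2*((2*n-2) + 2) := by ring
        _ = X^2*(2*n) := by rw [this]
      have h2 : (k+1)*(2*n*X^2) = k*(2*n*X^2) + 2*n*X^2 := by ring
      have h3 : X^2*(2*n) = 2*n*X^2 := by ring
      linarith
    calc ((X^2*(2*n-2) : ℕ) : ℕ∞) + (((X^2*2 : ℕ) : ℕ∞) +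
          (((k*(2*n*X^2) : ℕ) : ℕ∞) + cost (wgridW n n X M) (GV.w i (c+1+k) :: tail)))
        = ((X^2*(2*n-2) + (X^2*2 + (k*(2*n*X^2))) : ℕ) : ℕ∞) +
          cost (wgridW n n X M) (GV.w i (c+1+k) :: tail) := by
          push_cast; ring
      _ = (((k+1)*(2*n*X^2) : ℕ) : ℕ∞) +
          cost (wgridW n n X M) (GV.w i (c+(k+1)) :: tail) := by
          rw [harith, show c+1+k = c+(k+1) by omega]

end PathCost

/-- The canonical near-shortest walk from `a s` to `b i₀`. -/
def fullPath (n s i₀ : ℕ) : List GV :=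
  GV.a s :: (vseg s (i₀-1) 1 ++ (GV.x i₀ s :: (hseg i₀ (n-s) s ++ [GV.b i₀])))

section FullPath
variable {n X s : ℕ} {M : ℕ → ℕ → ℕ}

lemma cost_fullPath (hn : 1 ≤ n) (hX : 2 ≤ X) (hs1 : 1 ≤ s) (hs2 : s ≤ n)
    (i₀ : ℕ) (hi1 : 1 ≤ i₀) (hi2 : i₀ ≤ n) :
    cost (wgridW n n X M) (fullPath n s i₀) =
      ((X^2*(2*i₀*s + 2*n*(n-s) + (2*n-1)) + M i₀ s : ℕ) : ℕ∞) := by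
  obtain ⟨t, ht⟩ := vseg_cons s (i₀-1) 1
  have h1 : fullPath n s i₀ = GV.a s :: GV.v 1 s ::
      (t ++ (GV.x i₀ s :: (hseg i₀ (n-s) s ++ [GV.b i₀]))) := by
    simp [fullPath, ht]
  rw [h1, cost]
  have hback : GV.v 1 s :: (t ++ (GV.x i₀ s :: (hseg i₀ (n-s) s ++ [GV.b i₀]))) =
      vseg s (i₀-1) 1 ++ (GV.x i₀ s :: (hseg i₀ (n-s) s ++ [GV.b i₀])) := by
    simp [ht]
  rw [hback, cost_vseg hX hs1 hs2 (i₀-1) 1 (by omega) (by omega), Wav hX hs1 hs2]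
  rw [show 1+(i₀-1) = i₀ by omega]
  obtain ⟨t', ht'⟩ := hseg_cons i₀ (n-s) s
  have h2 : GV.x i₀ s :: (hseg i₀ (n-s) s ++ [GV.b i₀]) =
      GV.x i₀ s :: GV.w i₀ s :: (t' ++ [GV.b i₀]) := by simp [ht']
  rw [h2, cost, cost]
  have hback2 : GV.w i₀ s :: (t' ++ [GV.b i₀]) = hseg i₀ (n-s) s ++ [GV.b i₀] := by
    simp [ht']
  rw [hback2, cost_hseg hX i₀ hi1 hi2 (n-s) s hs1 (by omega) [GV.b i₀]]
  rw [show s+(n-s) = n by omega]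
  have hcb : cost (wgridW n n X M) [GV.w i₀ n, GV.b i₀] =
      wgridW n n X M (GV.w i₀ n) (GV.b i₀) + 0 := rfl
  rw [Wvx hX i₀ hi1 hi2 hs1 hs2, Wxw hX i₀ hi1 hi2 hs1 hs2, hcb, Wwb hX i₀ hi1 hi2 hn]
  have harith : X^2*(2*s-1) + ((i₀-1)*(2*s*X^2) +
      ((X^2 + M i₀ s) + (X^2 + ((n-s)*(2*n*X^2) + (X^2*(2*n-2) + 0))))) =
      X^2*(2*i₀*s + 2*n*(n-s) + (2*n-1)) + M i₀ s := by
    have e1 : X^2*(2*i₀*s + 2*n*(n-s) + (2*n-1)) =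
        X^2*(2*i₀*s) + X^2*(2*n*(n-s)) + X^2*(2*n-1) := by ring
    have e2 : X^2*(2*s-1) + X^2 = X^2*(2*s) := mul_pred (X^2) (2*s) (by omega)
    have e3 : X^2*(2*n-2) + X^2*2 = X^2*(2*n) := by
      have h : (2*n-2) + 2 = 2*n := by omega
      calc X^2*(2*n-2) + X^2*2 = X^2*((2*n-2) + 2) := by ring
      _ = X^2*(2*n) := by rw [h]
    have e4 : X^2*(2*n-1) + X^2 = X^2*(2*n) := mul_pred (X^2) (2*n) (by omega)
    have e5 : (i₀-1)*(2*s*X^2) + 2*s*X^2 = i₀*(2*s*X^2) := by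
      have h : (i₀-1)+1 = i₀ := by omega
      calc (i₀-1)*(2*s*X^2) + 2*s*X^2 = ((i₀-1)+1)*(2*s*X^2) := by ring
      _ = i₀*(2*s*X^2) := by rw [h]
    have e6 : X^2*(2*i₀*s) = i₀*(2*s*X^2) := by ring
    have e7 : X^2*(2*n*(n-s)) = (n-s)*(2*n*X^2) := by ring
    have e8 : X^2*(2*s) = 2*s*X^2 := by ring
    have e9 : X^2*2 + X^2 + X^2 = X^2*2*2 := by ring
    linarith
  calc ((X^2*(2*s-1) : ℕ) : ℕ∞) + ((((i₀-1)*(2*s*X^2) : ℕ) : ℕ∞) +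
        (((X^2 + M i₀ s : ℕ) : ℕ∞) + (((X^2 : ℕ) : ℕ∞) +
        ((((n-s)*(2*n*X^2) : ℕ) : ℕ∞) + (((X^2*(2*n-2) : ℕ) : ℕ∞) + 0)))))
      = ((X^2*(2*s-1) + ((i₀-1)*(2*s*X^2) +
        ((X^2 + M i₀ s) + (X^2 + ((n-s)*(2*n*X^2) + (X^2*(2*n-2) + 0))))) : ℕ) : ℕ∞) := by
        push_cast; ring
    _ = _ := by rw [harith]

lemma head_fullPath (n s i₀ : ℕ) : (fullPath n s i₀).head? = some (GV.a s) := rfl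

lemma last_fullPath (n s i₀ : ℕ) : (fullPath n s i₀).getLast? = some (GV.b i₀) := by
  have h : fullPath n s i₀ = (GV.a s :: (vseg s (i₀-1) 1 ++
      (GV.x i₀ s :: hseg i₀ (n-s) s))) ++ [GV.b i₀] := by
    simp [fullPath]
  rw [h]
  exact List.getLast?_concat

lemma gdist_formula (hn : 1 ≤ n) (hX : 2 ≤ X) (hs1 : 1 ≤ s) (hs2 : s ≤ n)
    (hM : ∀ i, 1 ≤ i → i ≤ n → M i s ≤ X) (i₀ : ℕ) (hi1 : 1 ≤ i₀) (hi2 : i₀ ≤ n) :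
    gdist (wgridW n n X M) (GV.a s) (GV.b i₀) =
      ((X^2*(2*i₀*s + 2*n*(n-s) + (2*n-1)) + M i₀ s : ℕ) : ℕ∞) := by
  refine le_antisymm ?_ ?_
  · exact sInf_le ⟨fullPath n s i₀, head_fullPath n s i₀, last_fullPath n s i₀,
      cost_fullPath hn hX hs1 hs2 i₀ hi1 hi2⟩
  · have h := gdist_ge hn hX hs1 hs2 hM (GV.b i₀)
    have hp : pot n X s M (GV.b i₀) =
        X^2*(2*i₀*s + 2*n*(n-s) + (2*n-1)) + M i₀ s := by simp [pot]
    rwa [hp] at h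

end FullPath

/-- Binary encoding of a bool list with an implicit leading 1. -/
def bnum : List Bool → ℕ
  | [] => 1
  | b :: t => 2 * bnum t + cond b 1 0

lemma bnum_pos (l : List Bool) : 1 ≤ bnum l := by
  cases l with
  | nil => simp [bnum]
  | cons b t => have := bnum_pos t; simp [bnum]; cases b <;> simp <;> omega

lemma bnum_lt (l : List Bool) : bnum l < 2 ^ (l.length + 1) := by
  induction l with
  | nil => simp [bnum]
  | cons b t ih => simp [bnum, List.length_cons, pow_succ]; cases b <;> simp <;> omega

lemma bnum_inj : ∀ l1 l2 : List Bool, bnum l1 = bnum l2 → l1 = l2 := by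
  intro l1
  induction l1 with
  | nil => intro l2 h; cases l2 with
    | nil => rfl
    | cons b t => exfalso; have := bnum_pos t; simp [bnum] at h; cases b <;> simp at h <;> omega
  | cons b t ih =>
    intro l2 h
    cases l2 with
    | nil => exfalso; have := bnum_pos t; simp [bnum] at h; cases b <;> simp at h <;> omega
    | cons b' t' =>
      simp [bnum] at h
      have hb : b = b' ∧ bnum t = bnum t' := by cases b <;> cases b' <;> simp at h ⊢ <;> omega
      rw [hb.1, ih _ hb.2]

lemma count_lemma (n X L : ℕ)
    (g : (Fin n → Fin n → Fin (X+1)) → (Fin n → List Bool) × (Fin n → List Bool))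
    (hlen : ∀ A k, ((g A).1 k).length ≤ L ∧ ((g A).2 k).length ≤ L)
    (hinj : Function.Injective g) :
    (X+1)^(n^2) ≤ 2^(2*n*(L+1)) := by
  classical
  set T := Fin (2^(L+1))
  have hG : ∀ (A : Fin n → Fin n → Fin (X+1)) (k : Fin n) (s : Bool),
      bnum (if s then (g A).1 k else (g A).2 k) < 2^(L+1) := by
    intro A k s
    have h1 := bnum_lt (if s then (g A).1 k else (g A).2 k)
    have h2 : (if s then (g A).1 k else (g A).2 k).length ≤ L := by
      cases s <;> simp [(hlen A k).1, (hlen A k).2]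
    calc bnum _ < 2 ^ ((if s then (g A).1 k else (g A).2 k).length + 1) := h1
      _ ≤ 2 ^ (L+1) := Nat.pow_le_pow_right (by norm_num) (by omega)
  let G : (Fin n → Fin n → Fin (X+1)) → (Fin n → T) × (Fin n → T) :=
    fun A => (fun k => ⟨bnum ((g A).1 k), hG A k true⟩,
      fun k => ⟨bnum ((g A).2 k), hG A k false⟩)
  have hGinj : Function.Injective G := by
    intro A B h
    apply hinj
    have h1 := congrArg Prod.fst h
    have h2 := congrArg Prod.snd h
    ext1
    · funext k
      have := congrFun h1 k
      simp only [G] at this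
      exact bnum_inj _ _ (congrArg Fin.val this)
    · funext k
      have := congrFun h2 k
      simp only [G] at this
      exact bnum_inj _ _ (congrArg Fin.val this)
  have hcard := Fintype.card_le_of_injective G hGinj
  simp only [Fintype.card_prod, Fintype.card_fun, Fintype.card_fin, T] at hcard
  calc (X+1)^(n^2) = ((X+1)^n)^n := by rw [← pow_mul, sq]
    _ ≤ _ := hcard
    _ = 2^(2*n*(L+1)) := by rw [← pow_mul, ← pow_add, ← two_mul, ← mul_assoc]; ring_nf

/-- Extension of a `Fin`-indexed matrix to ℕ-indices (1-based). -/
def mat (n X : ℕ) (A : Fin n → Fin n → Fin (X+1)) : ℕ → ℕ → ℕ :=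
  fun i j => if h : 1 ≤ i ∧ i ≤ n ∧ 1 ≤ j ∧ j ≤ n then
    (A ⟨i-1, by omega⟩ ⟨j-1, by omega⟩ : ℕ) else 0

lemma mat_le {n X : ℕ} (A : Fin n → Fin n → Fin (X+1)) (i j : ℕ) :
    mat n X A i j ≤ X := by
  unfold mat
  split_ifs with h
  · exact Fin.is_le _
  · exact Nat.zero_le _

lemma mat_apply {n X : ℕ} (A : Fin n → Fin n → Fin (X+1)) (i j : Fin n) :
    mat n X A ((i:ℕ)+1) ((j:ℕ)+1) = A i j := by
  unfold mat
  rw [dif_pos ⟨by omega, by omega, by omega, by omega⟩]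
  simp only [Nat.add_sub_cancel, Fin.eta]


/-- distance-labeling lower bound.  Fix `n ≥ 1` and `X ≥ 2`, and
consider the family of weighted grid embeddings `G_M` of all `n × n` matrices `M` with
integer entries in `{0, …, X}`.  Suppose `ℓ` assigns to each such `G_M` and each vertex a
binary string of length at most `L`, and `f` decodes distances:
`f (ℓ M u) (ℓ M v) = d_{G_M}(u, v)` for every such `M` and all vertices `u, v`.
Then `2^(2n(L+1)) ≥ (X+1)^(n²)`; in particular `L ≥ (n/2)·log₂(X+1) − 1`. -/
theorem distance_labeling_lower_bound (n X L : ℕ) (hn : 1 ≤ n) (hX : 2 ≤ X)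
    (ℓ : (ℕ → ℕ → ℕ) → GV → List Bool)
    (hL : ∀ M : ℕ → ℕ → ℕ, (∀ i j, 1 ≤ i → i ≤ n → 1 ≤ j → j ≤ n → M i j ≤ X) →
      ∀ v : GV, (ℓ M v).length ≤ L)
    (f : List Bool → List Bool → ℕ∞)
    (hf : ∀ M : ℕ → ℕ → ℕ, (∀ i j, 1 ≤ i → i ≤ n → 1 ≤ j → j ≤ n → M i j ≤ X) →
      ∀ u v : GV, f (ℓ M u) (ℓ M v) = gdist (wgridW n n X M) u v) :
    (X + 1) ^ (n ^ 2) ≤ 2 ^ (2 * n * (L + 1)) ∧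
      ((n : ℝ) / 2) * Real.logb 2 ((X : ℝ) + 1) - 1 ≤ (L : ℝ) := by
  classical
  have hbound : ∀ A : Fin n → Fin n → Fin (X+1),
      ∀ i j, 1 ≤ i → i ≤ n → 1 ≤ j → j ≤ n → mat n X A i j ≤ X :=
    fun A i j _ _ _ _ => mat_le A i j
  have hcard : (X+1)^(n^2) ≤ 2^(2*n*(L+1)) := by
    refine count_lemma n X L
      (fun A => (fun k => ℓ (mat n X A) (GV.a ((k:ℕ)+1)),
                 fun k => ℓ (mat n X A) (GV.b ((k:ℕ)+1)))) ?_ ?_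
    · intro A k
      exact ⟨hL _ (hbound A) _, hL _ (hbound A) _⟩
    · intro A B hAB
      have hA1 := congrArg Prod.fst hAB
      have hA2 := congrArg Prod.snd hAB
      simp only at hA1 hA2
      funext i j
      have ha : ℓ (mat n X A) (GV.a ((j:ℕ)+1)) = ℓ (mat n X B) (GV.a ((j:ℕ)+1)) :=
        congrFun hA1 j
      have hb : ℓ (mat n X A) (GV.b ((i:ℕ)+1)) = ℓ (mat n X B) (GV.b ((i:ℕ)+1)) :=
        congrFun hA2 i
      have hcolA : ∀ i', 1 ≤ i' → i' ≤ n → mat n X A i' ((j:ℕ)+1) ≤ X :=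
        fun i' _ _ => mat_le A _ _
      have hcolB : ∀ i', 1 ≤ i' → i' ≤ n → mat n X B i' ((j:ℕ)+1) ≤ X :=
        fun i' _ _ => mat_le B _ _
      have hd : gdist (wgridW n n X (mat n X A)) (GV.a ((j:ℕ)+1)) (GV.b ((i:ℕ)+1)) =
          gdist (wgridW n n X (mat n X B)) (GV.a ((j:ℕ)+1)) (GV.b ((i:ℕ)+1)) := by
        rw [← hf (mat n X A) (hbound A), ← hf (mat n X B) (hbound B), ha, hb]
      rw [gdist_formula hn hX (by omega) (by omega : (j:ℕ)+1 ≤ n) hcolA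
            ((i:ℕ)+1) (by omega) (by omega : (i:ℕ)+1 ≤ n),
          gdist_formula hn hX (by omega) (by omega : (j:ℕ)+1 ≤ n) hcolB
            ((i:ℕ)+1) (by omega) (by omega : (i:ℕ)+1 ≤ n)] at hd
      have hd' : X^2*(2*((i:ℕ)+1)*((j:ℕ)+1) + 2*n*(n-((j:ℕ)+1)) + (2*n-1)) +
            mat n X A ((i:ℕ)+1) ((j:ℕ)+1) =
          X^2*(2*((i:ℕ)+1)*((j:ℕ)+1) + 2*n*(n-((j:ℕ)+1)) + (2*n-1)) +
            mat n X B ((i:ℕ)+1) ((j:ℕ)+1) := by exact_mod_cast hd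
      have : mat n X A ((i:ℕ)+1) ((j:ℕ)+1) = mat n X B ((i:ℕ)+1) ((j:ℕ)+1) := by omega
      rw [mat_apply, mat_apply] at this
      exact Fin.val_injective this
  refine ⟨hcard, ?_⟩
  have hreal : ((X:ℝ)+1)^(n^2) ≤ (2:ℝ)^(2*n*(L+1)) := by exact_mod_cast hcard
  have hpos : (0:ℝ) < ((X:ℝ)+1)^(n^2) := by positivity
  have hlog := Real.logb_le_logb_of_le (b := 2) (by norm_num) hpos hreal
  rw [Real.logb_pow, Real.logb_pow, Real.logb_self_eq_one (by norm_num)]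
    at hlog
  have ht0 : 0 ≤ Real.logb 2 ((X:ℝ)+1) :=
    Real.logb_nonneg (by norm_num) (by exact_mod_cast Nat.le_add_left 1 X)
  have hn1 : (1:ℝ) ≤ (n:ℝ) := by exact_mod_cast hn
  have key : (n:ℝ) * Real.logb 2 ((X:ℝ)+1) ≤ 2*((L:ℝ)+1) := by
    have hsq : ((n^2 : ℕ) : ℝ) = (n:ℝ)*(n:ℝ) := by push_cast; ring
    have hexp : ((2*n*(L+1) : ℕ) : ℝ) = 2*(n:ℝ)*((L:ℝ)+1) := by push_cast; ring
    nlinarith [hlog, ht0, hn1]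
  linarith
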